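/- For every real t and nonnegative integers m, n: ∫_ℝ H_m(y) H_n(y) e^{-y² - ity} dy = (-1)^n √π · 2^{(m+n)/2} · e^{-t²/4} · H_{m,n}(-it/√2, it/√2). -/

import Mathlib

open MeasureTheory Complex Real

noncomputable def Hphys (n : ℕ) (x : ℝ) : ℝ :=
  (-1 : ℝ)^n * Real.exp (x^2) * iteratedDeriv n (fun t : ℝ => Real.exp (-t^2)) x

noncomputable def hFun (n : ℕ) (x : ℝ) : ℝ := Real.exp (-x^2/2) * Hphys n x

noncomputable def Hc (m n : ℕ) (z : ℂ) : ℂ :=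
  ∑ k ∈ Finset.range (min m n + 1),
    (-1 : ℂ)^k * (Nat.factorial k : ℂ) * (Nat.choose m k : ℂ) * (Nat.choose n k : ℂ)
      * z^(m-k) * (starRingEnd ℂ z)^(n-k)

noncomputable def Lag (n α : ℕ) (x : ℂ) : ℂ :=
  ∑ k ∈ Finset.range (n + 1),
    (-1 : ℂ)^k * (Nat.choose (n + α) (n - k) : ℂ) * x^k / (Nat.factorial k : ℂ)

namespace HermiteFourierAux
open Polynomial

noncomputable def Hp : ℕ → Polynomial ℝ
  | 0 => 1
  | n + 1 => C 2 * X * Hp n - derivative (Hp n)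

lemma hasDerivAt_pg (P : Polynomial ℝ) (x : ℝ) :
    HasDerivAt (fun y : ℝ => P.eval y * Real.exp (-y ^ 2))
      ((derivative P - C 2 * X * P).eval x * Real.exp (-x ^ 2)) x := by
  have h2 : HasDerivAt (fun y : ℝ => -y ^ 2) (-(2 * x)) x := by
    simpa using (hasDerivAt_pow 2 x).fun_neg
  have h1 := h2.exp
  have := (P.hasDerivAt x).fun_mul h1
  refine this.congr_deriv ?_
  simp
  ring

lemma iteratedDeriv_gauss (n : ℕ) :
    iteratedDeriv n (fun y : ℝ => Real.exp (-y ^ 2)) =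
      fun x => (-1 : ℝ) ^ n * (Hp n).eval x * Real.exp (-x ^ 2) := by
  induction n with
  | zero => funext x; simp [Hp]
  | succ n ih =>
    funext x
    rw [iteratedDeriv_succ, ih]
    have h : (fun x => (-1:ℝ)^n * (Hp n).eval x * Real.exp (-x^2))
        = fun x => (-1:ℝ)^n * ((Hp n).eval x * Real.exp (-x^2)) := by
      funext y; ring
    rw [h]
    have hd : HasDerivAt (fun x => (-1:ℝ)^n * ((Hp n).eval x * Real.exp (-x^2)))
        ((-1:ℝ)^n * ((derivative (Hp n) - C 2 * X * Hp n).eval x * Real.exp (-x^2))) x :=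
      (hasDerivAt_pg (Hp n) x).const_mul _
    rw [hd.deriv]
    show _ = (-1:ℝ)^(n+1) * (C 2 * X * Hp n - derivative (Hp n)).eval x * Real.exp (-x^2)
    simp [pow_succ]
    ring

lemma Hphys_eval (n : ℕ) (x : ℝ) : Hphys n x = (Hp n).eval x := by
  unfold Hphys
  rw [iteratedDeriv_gauss]
  have h1 : Real.exp (x^2) * Real.exp (-x^2) = 1 := by
    rw [← Real.exp_add]; simp
  have h2 : (-1:ℝ)^n * (-1:ℝ)^n = 1 := by
    rw [← mul_pow]; norm_num
  calc (-1:ℝ)^n * Real.exp (x^2) * ((-1:ℝ)^n * (Hp n).eval x * Real.exp (-x^2))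
      = ((-1:ℝ)^n * (-1:ℝ)^n) * (Real.exp (x^2) * Real.exp (-x^2)) * (Hp n).eval x := by ring
    _ = (Hp n).eval x := by rw [h1, h2]; ring

lemma derivHp' : ∀ n : ℕ, derivative (Hp (n+1)) = C (2*(n+1) : ℝ) * Hp n
  | 0 => by
      show derivative (C 2 * X * Hp 0 - derivative (Hp 0)) = _
      simp [Hp]
  | (n+1) => by
      show derivative (C 2 * X * Hp (n+1) - derivative (Hp (n+1))) = _
      rw [derivative_sub, derivative_mul, derivative_mul, derivative_C, derivative_X,
        derivHp' n, derivative_mul, derivative_C]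
      have hHp : (Hp (n+1) : Polynomial ℝ) = C 2 * X * Hp n - derivative (Hp n) := rfl
      have hC : (C (2*((n:ℝ)+1+1)) : Polynomial ℝ) = C (2*((n:ℝ)+1)) + C 2 := by
        rw [← C_add]; ring_nf
      push_cast
      rw [hHp, hC]
      ring

lemma derivHp (n : ℕ) : derivative (Hp n) = C (2 * n : ℝ) * Hp (n - 1) := by
  cases n with
  | zero => simp [Hp]
  | succ k => rw [derivHp' k]; push_cast; simp

lemma poly_rec (m n : ℕ) : Hp m * Hp (n+1) =
    (C 2 * X * (Hp m * Hp n) - derivative (Hp m * Hp n)) + C (2*m : ℝ) * (Hp (m-1) * Hp n) := by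
  show Hp m * (C 2 * X * Hp n - derivative (Hp n)) = _
  rw [derivative_mul, derivHp m]
  ring

lemma integrable_pow_gauss (k : ℕ) : Integrable (fun x : ℝ => x ^ k * Real.exp (-x ^ 2)) := by
  have hg : Integrable (fun x : ℝ => Real.exp (-(1/2 : ℝ) * x ^ 2)) :=
    integrable_exp_neg_mul_sq (by norm_num)
  refine ((hg.const_mul ((1 + 2 ^ k * k.factorial : ℝ))).mono' ?_ ?_)
  · exact ((continuous_pow k).mul (Continuous.rexp (by continuity))).aestronglyMeasurable
  · filter_upwards with x
    have hx2 : (0:ℝ) ≤ x^2 := sq_nonneg x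
    have key : (x^2/2)^k / k.factorial ≤ Real.exp (x^2/2) :=
      Real.pow_div_factorial_le_exp _ (by positivity) k
    have hfac : (0:ℝ) < k.factorial := by positivity
    have h1 : (x^2)^k ≤ 2^k * k.factorial * Real.exp (x^2/2) := by
      have h := (div_le_iff₀ hfac).mp key
      calc (x^2)^k = (x^2/2)^k * 2^k := by rw [div_pow]; field_simp
        _ ≤ Real.exp (x^2/2) * k.factorial * 2^k := by
            have h2k : (0:ℝ) < 2^k := by positivity
            nlinarith
        _ = 2^k * k.factorial * Real.exp (x^2/2) := by ring
    have habs : |x|^k ≤ 1 + (x^2)^k := by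
      rcases le_or_gt (|x|) 1 with h | h
      · have : |x|^k ≤ 1 := pow_le_one₀ (abs_nonneg x) h
        nlinarith [pow_nonneg (sq_nonneg x) k]
      · have h2 : |x|^k ≤ (|x|^2)^k := by
          rw [← pow_mul]
          exact pow_le_pow_right₀ h.le (by omega)
        rw [_root_.sq_abs] at h2
        linarith
    have hexp : Real.exp (-x^2) = Real.exp (-(x^2/2)) * Real.exp (-(x^2/2)) := by
      rw [← Real.exp_add]; ring_nf
    have hpos : (0:ℝ) < Real.exp (-(x^2/2)) := Real.exp_pos _
    have hmain : |x|^k * Real.exp (-x^2) ≤ (1 + 2^k * k.factorial) * Real.exp (-(x^2/2)) := by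
      have e1 : (x^2)^k * Real.exp (-x^2) ≤ 2^k * k.factorial * Real.exp (-(x^2/2)) := by
        rw [hexp]
        have hstep : (x^2)^k * Real.exp (-(x^2/2)) ≤ 2^k * k.factorial := by
          have hE : Real.exp (x^2/2) * Real.exp (-(x^2/2)) = 1 := by
            rw [← Real.exp_add]; simp
          calc (x^2)^k * Real.exp (-(x^2/2))
              ≤ (2^k * k.factorial * Real.exp (x^2/2)) * Real.exp (-(x^2/2)) :=
                mul_le_mul_of_nonneg_right h1 hpos.le
            _ = 2^k * k.factorial * (Real.exp (x^2/2) * Real.exp (-(x^2/2))) := by ring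
            _ = 2^k * k.factorial := by rw [hE]; ring
        calc (x^2)^k * (Real.exp (-(x^2/2)) * Real.exp (-(x^2/2)))
            = ((x^2)^k * Real.exp (-(x^2/2))) * Real.exp (-(x^2/2)) := by ring
          _ ≤ 2^k * k.factorial * Real.exp (-(x^2/2)) := mul_le_mul_of_nonneg_right hstep hpos.le
      have e0 : Real.exp (-x^2) ≤ Real.exp (-(x^2/2)) := Real.exp_le_exp.mpr (by linarith)
      have := mul_le_mul_of_nonneg_right habs (Real.exp_pos (-x^2)).le
      nlinarith
    have hnorm : ‖x^k * Real.exp (-x^2)‖ = |x|^k * Real.exp (-x^2) := by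
      rw [norm_mul, norm_pow]
      simp [Real.norm_eq_abs, _root_.abs_of_pos (Real.exp_pos _)]
    rw [hnorm]
    have : Real.exp (-(1/2:ℝ) * x^2) = Real.exp (-(x^2/2)) := by ring_nf
    rw [this]
    exact hmain

lemma integrable_poly_gauss (P : Polynomial ℝ) :
    Integrable (fun x : ℝ => P.eval x * Real.exp (-x ^ 2)) := by
  have h : (fun x : ℝ => P.eval x * Real.exp (-x^2))
      = fun x => ∑ i ∈ Finset.range (P.natDegree+1), P.coeff i * (x^i * Real.exp (-x^2)) := by
    funext x
    rw [Polynomial.eval_eq_sum_range, Finset.sum_mul]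
    simp [mul_assoc]
  rw [h]
  exact integrable_finset_sum _ (fun i _ => (integrable_pow_gauss i).const_mul _)

lemma integrable_kernel (P : Polynomial ℝ) (t : ℝ) :
    Integrable (fun x : ℝ =>
      Complex.exp (-(Complex.I * t * x)) * ((P.eval x * Real.exp (-x^2) : ℝ) : ℂ)) := by
  refine (Integrable.bdd_mul ((integrable_poly_gauss P).ofReal) ?_ (c := 1) (Filter.Eventually.of_forall fun x => ?_))
  · apply Continuous.aestronglyMeasurable
    continuity
  · rw [Complex.norm_exp]
    simp

lemma ibp_step (P : Polynomial ℝ) (t : ℝ) :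
    (∫ x : ℝ, Complex.exp (-(Complex.I * t * x)) *
        (((derivative P - C 2 * X * P).eval x * Real.exp (-x^2) : ℝ) : ℂ))
      = (Complex.I * t) * ∫ x : ℝ, Complex.exp (-(Complex.I * t * x)) *
        ((P.eval x * Real.exp (-x^2) : ℝ) : ℂ) := by
  set f : ℝ → ℂ := fun x => ((P.eval x * Real.exp (-x^2) : ℝ) : ℂ) with hfdef
  have hf : Integrable f := (integrable_poly_gauss P).ofReal
  have hdf : Differentiable ℝ f := fun x => ((hasDerivAt_pg P x).ofReal_comp).differentiableAt
  have hderiv : deriv f = fun x => (((derivative P - C 2*X*P).eval x * Real.exp (-x^2) : ℝ) : ℂ) :=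
    funext fun x => ((hasDerivAt_pg P x).ofReal_comp).deriv
  have hf' : Integrable (deriv f) := by
    rw [hderiv]; exact (integrable_poly_gauss _).ofReal
  have key := congrFun (Real.fourier_deriv hf hdf hf') (t / (2 * Real.pi))
  rw [Real.fourier_real_eq_integral_exp_smul, Real.fourier_real_eq_integral_exp_smul] at key
  have hπ : (Real.pi : ℝ) ≠ 0 := Real.pi_ne_zero
  have harg : ∀ x : ℝ, ((-2 * Real.pi * x * (t / (2 * Real.pi)) : ℝ) : ℂ) * Complex.I
      = -(Complex.I * t * x) := by
    intro x
    have : (-2 * Real.pi * x * (t / (2 * Real.pi)) : ℝ) = -(t * x) := by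
      field_simp
    rw [this]; push_cast; ring
  have hc : (2 * (Real.pi : ℂ) * Complex.I * ((t / (2 * Real.pi) : ℝ) : ℂ)) = Complex.I * t := by
    push_cast
    have : ((Real.pi : ℂ)) ≠ 0 := by exact_mod_cast hπ
    field_simp
  simp only [smul_eq_mul] at key
  calc (∫ x : ℝ, Complex.exp (-(Complex.I * t * x)) *
          (((derivative P - C 2 * X * P).eval x * Real.exp (-x^2) : ℝ) : ℂ))
      = ∫ x : ℝ, Complex.exp (((-2 * Real.pi * x * (t / (2 * Real.pi)) : ℝ) : ℂ) * Complex.I) * deriv f x := by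
        congr 1; funext x; rw [harg x, hderiv]
    _ = (2 * (Real.pi : ℂ) * Complex.I * ((t / (2 * Real.pi) : ℝ) : ℂ)) *
          ∫ x : ℝ, Complex.exp (((-2 * Real.pi * x * (t / (2 * Real.pi)) : ℝ) : ℂ) * Complex.I) * f x := key
    _ = (Complex.I * t) * ∫ x : ℝ, Complex.exp (-(Complex.I * t * x)) * f x := by
        have hI : (∫ x : ℝ, Complex.exp (((-2 * Real.pi * x * (t / (2 * Real.pi)) : ℝ) : ℂ) * Complex.I) * f x)
            = ∫ x : ℝ, Complex.exp (-(Complex.I * t * x)) * f x := by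
          apply integral_congr_ae
          filter_upwards with x
          rw [harg x]
        rw [hc, hI]

lemma gauss_base (t : ℝ) :
    (∫ x : ℝ, Complex.exp (-(Complex.I * t * x)) * ((Real.exp (-x^2) : ℝ) : ℂ))
      = ((Real.sqrt Real.pi : ℝ) : ℂ) * Complex.exp (-(t:ℂ)^2 / 4) := by
  have h := fourierIntegral_gaussian (b := 1) (by norm_num) (-(t:ℂ))
  have h1 : (∫ x : ℝ, Complex.exp (Complex.I * (-(t:ℂ)) * x) * Complex.exp (-1 * (x:ℂ)^2))
      = (∫ x : ℝ, Complex.exp (-(Complex.I * t * x)) * ((Real.exp (-x^2) : ℝ) : ℂ)) := by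
    congr 1; funext x
    rw [Complex.ofReal_exp]
    push_cast
    ring_nf
  rw [h1] at h
  rw [h]
  congr 1
  · rw [div_one, Real.sqrt_eq_rpow,
      show ((1/2:ℂ)) = (((1/2:ℝ)):ℂ) by norm_num,
      Complex.ofReal_cpow Real.pi_pos.le]
  · congr 1
    ring

noncomputable def Rpol (t : ℝ) (m n : ℕ) : ℂ :=
  ∑ k ∈ Finset.range (n+1),
    (m.choose k : ℂ) * (n.choose k : ℂ) * 2^k * (k.factorial : ℂ) * (-(Complex.I*t))^(m+n-2*k)

lemma Rpol_right_zero (t : ℝ) (m : ℕ) : Rpol t m 0 = (-(Complex.I*t))^m := by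
  simp [Rpol]

lemma Rpol_left_zero (t : ℝ) (n : ℕ) : Rpol t 0 n = (-(Complex.I*t))^n := by
  rw [Rpol, Finset.sum_eq_single_of_mem 0 (Finset.mem_range.mpr (by omega))]
  · simp
  · intro k _ hk
    have : Nat.choose 0 k = 0 := Nat.choose_eq_zero_of_lt (by omega)
    simp [this]

lemma Rpol_rec (t : ℝ) (m n : ℕ) :
    Rpol t m (n+1) = (-(Complex.I*t)) * Rpol t m n + (2*m:ℂ) * Rpol t (m-1) n := by
  set x : ℂ := -(Complex.I*t) with hxdef
  cases m with
  | zero =>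
    rw [Rpol_left_zero, Rpol_left_zero]
    simp [pow_succ]
    ring
  | succ m' =>
    have hm1 : (m' + 1 : ℕ) - 1 = m' := rfl
    rw [hm1]
    set m : ℕ := m' + 1 with hmdef
    -- expansions
    have hA : Rpol t m (n+1)
        = (∑ k ∈ Finset.range (n+1),
            (m.choose (k+1) : ℂ) * ((n+1).choose (k+1)) * 2^(k+1) * ((k+1).factorial)
              * x^(m+(n+1)-2*(k+1))) + x^(m+n+1) := by
      rw [Rpol, Finset.sum_range_succ']
      congr 1
      rw [show m + (n+1) - 2*0 = m + n + 1 by omega]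
      simp [hxdef]
    have hsplit : ∀ k ∈ Finset.range (n+1),
        (m.choose (k+1) : ℂ) * ((n+1).choose (k+1)) * 2^(k+1) * ((k+1).factorial)
            * x^(m+(n+1)-2*(k+1))
        = ((m.choose (k+1) : ℂ) * (n.choose k) * 2^(k+1) * ((k+1).factorial) * x^(m+n-1-2*k))
          + ((m.choose (k+1) : ℂ) * (n.choose (k+1)) * 2^(k+1) * ((k+1).factorial) * x^(m+n-1-2*k)) := by
      intro k _
      have he : m+(n+1)-2*(k+1) = m+n-1-2*k := by omega
      rw [he, Nat.choose_succ_succ n k]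
      push_cast
      ring
    have hC : (2*(m:ℕ):ℂ) * Rpol t m' n
        = ∑ k ∈ Finset.range (n+1),
            (m.choose (k+1) : ℂ) * (n.choose k) * 2^(k+1) * ((k+1).factorial) * x^(m+n-1-2*k) := by
      rw [Rpol, Finset.mul_sum]
      refine Finset.sum_congr rfl fun k _ => ?_
      have he : m' + n - 2*k = m+n-1-2*k := by omega
      have hch := Nat.add_one_mul_choose_eq m' k
      have hchC : ((m'+1) : ℂ) * (m'.choose k) = (m.choose (k+1) : ℂ) * (k+1) := by
        exact_mod_cast congrArg (Nat.cast : ℕ → ℂ) hch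
      rw [← he, Nat.factorial_succ]
      push_cast [hmdef]
      push_cast [hmdef] at hchC
      linear_combination ((n.choose k : ℂ) * 2^(k+1) * (k.factorial) * x^(m'+n-2*k)) * hchC
    have hB : x * Rpol t m n
        = ∑ k ∈ Finset.range (n+1),
            (m.choose k : ℂ) * (n.choose k) * 2^k * (k.factorial) * x^(m+n+1-2*k) := by
      rw [Rpol, Finset.mul_sum]
      refine Finset.sum_congr rfl fun k hk => ?_
      by_cases hkm : k ≤ m
      · have he : m+n+1-2*k = (m+n-2*k)+1 := by
          have := Finset.mem_range.mp hk; omega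
        rw [he, pow_succ]
        ring
      · have : m.choose k = 0 := Nat.choose_eq_zero_of_lt (by omega)
        simp [this]
    have hB2 : (∑ k ∈ Finset.range (n+1),
            (m.choose k : ℂ) * (n.choose k) * 2^k * (k.factorial) * x^(m+n+1-2*k))
        = (∑ k ∈ Finset.range n,
            (m.choose (k+1) : ℂ) * (n.choose (k+1)) * 2^(k+1) * ((k+1).factorial) * x^(m+n-1-2*k))
          + x^(m+n+1) := by
      rw [Finset.sum_range_succ']
      congr 1
      · refine Finset.sum_congr rfl fun k _ => ?_
        have he : m+n+1-2*(k+1) = m+n-1-2*k := by omega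
        rw [he]
      · simp
    have hQ : (∑ k ∈ Finset.range (n+1),
            (m.choose (k+1) : ℂ) * (n.choose (k+1)) * 2^(k+1) * ((k+1).factorial) * x^(m+n-1-2*k))
        = ∑ k ∈ Finset.range n,
            (m.choose (k+1) : ℂ) * (n.choose (k+1)) * 2^(k+1) * ((k+1).factorial) * x^(m+n-1-2*k) := by
      rw [Finset.sum_range_succ]
      have : n.choose (n+1) = 0 := Nat.choose_eq_zero_of_lt (by omega)
      simp [this]
    rw [hA, Finset.sum_congr rfl hsplit, Finset.sum_add_distrib, hQ]
    rw [hB, hB2, hC]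
    ring

noncomputable def FInt (t : ℝ) (m n : ℕ) : ℂ :=
  ∫ x : ℝ, Complex.exp (-(Complex.I*t*x)) * (((Hp m * Hp n).eval x * Real.exp (-x^2) : ℝ) : ℂ)

lemma FInt_symm (t : ℝ) (m n : ℕ) : FInt t m n = FInt t n m := by
  unfold FInt; rw [mul_comm (Hp m)]

lemma FInt_rec (t : ℝ) (m n : ℕ) :
    FInt t m (n+1) = (-(Complex.I*t)) * FInt t m n + (2*m:ℂ) * FInt t (m-1) n := by
  have hfun : (fun x : ℝ => Complex.exp (-(Complex.I*t*x))
        * (((Hp m * Hp (n+1)).eval x * Real.exp (-x^2) : ℝ) : ℂ))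
      = (fun x : ℝ =>
          (-(Complex.exp (-(Complex.I*t*x)) *
            (((derivative (Hp m * Hp n) - C 2 * X * (Hp m * Hp n)).eval x * Real.exp (-x^2) : ℝ) : ℂ)))
          + ((2*(m:ℝ):ℂ) * (Complex.exp (-(Complex.I*t*x)) *
            (((Hp (m-1) * Hp n).eval x * Real.exp (-x^2) : ℝ) : ℂ)))) := by
    funext y
    have hev : (Hp m * Hp (n+1)).eval y
        = -((derivative (Hp m * Hp n) - C 2 * X * (Hp m * Hp n)).eval y)
          + 2*(m:ℝ)*((Hp (m-1) * Hp n).eval y) := by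
      rw [poly_rec m n]
      simp only [eval_add, eval_sub, eval_mul, eval_C, eval_X, eval_neg]
      ring
    rw [hev]
    push_cast
    ring
  have h1 : Integrable (fun x : ℝ => -(Complex.exp (-(Complex.I*t*x)) *
      (((derivative (Hp m * Hp n) - C 2 * X * (Hp m * Hp n)).eval x * Real.exp (-x^2) : ℝ) : ℂ))) :=
    (integrable_kernel _ t).neg
  have h2 : Integrable (fun x : ℝ => (2*(m:ℝ):ℂ) * (Complex.exp (-(Complex.I*t*x)) *
      (((Hp (m-1) * Hp n).eval x * Real.exp (-x^2) : ℝ) : ℂ))) :=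
    (integrable_kernel _ t).const_mul _
  rw [FInt, hfun, integral_add h1 h2,
    integral_neg, MeasureTheory.integral_const_mul, ibp_step (Hp m * Hp n) t]
  rw [FInt, FInt]
  push_cast
  ring

lemma FInt_zero_zero (t : ℝ) : FInt t 0 0 = ((Real.sqrt Real.pi : ℝ) : ℂ) * Complex.exp (-(t:ℂ)^2 / 4) := by
  have h : (Hp 0 * Hp 0 : Polynomial ℝ) = 1 := by
    show (1 * 1 : Polynomial ℝ) = 1
    ring
  rw [FInt, h]
  simp only [eval_one, one_mul]
  exact gauss_base t

lemma FInt_zero_left (t : ℝ) : ∀ n : ℕ,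
    FInt t 0 n = (-(Complex.I*t))^n * (((Real.sqrt Real.pi : ℝ) : ℂ) * Complex.exp (-(t:ℂ)^2 / 4))
  | 0 => by rw [pow_zero, one_mul, FInt_zero_zero]
  | (n+1) => by
      rw [FInt_rec, FInt_zero_left t n]
      simp [pow_succ]
      ring

lemma FInt_eq_Rpol (t : ℝ) : ∀ n m : ℕ,
    FInt t m n = ((Real.sqrt Real.pi : ℝ) : ℂ) * Complex.exp (-(t:ℂ)^2 / 4) * Rpol t m n := by
  intro n
  induction n with
  | zero =>
    intro m
    rw [FInt_symm, FInt_zero_left, Rpol_right_zero]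
    ring
  | succ n ih =>
    intro m
    rw [FInt_rec, ih m, ih (m-1), Rpol_rec]
    ring

lemma sqrt2_pow (m n : ℕ) :
    (((2 : ℝ) ^ (((m : ℝ) + n) / 2) : ℝ) : ℂ) = ((Real.sqrt 2 : ℝ) : ℂ)^(m+n) := by
  have hreal : (2 : ℝ) ^ (((m : ℝ) + n) / 2) = (Real.sqrt 2)^(m+n) := by
    rw [Real.sqrt_eq_rpow, ← Real.rpow_natCast ((2:ℝ) ^ ((1:ℝ)/2)) (m+n),
      ← Real.rpow_mul (by norm_num : (0:ℝ) ≤ 2)]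
    congr 1
    push_cast
    ring
  rw [hreal]
  push_cast
  ring

lemma Hc_eq_Rpol (t : ℝ) (m n : ℕ) :
    (-1:ℂ)^n * (((2 : ℝ) ^ (((m : ℝ) + n) / 2) : ℝ) : ℂ)
        * Hc m n (-(Complex.I * t) / ((Real.sqrt 2 : ℝ) : ℂ)) = Rpol t m n := by
  set x : ℂ := -(Complex.I * (t:ℂ)) with hxdef
  set S : ℂ := ((Real.sqrt 2 : ℝ) : ℂ) with hSdef
  have hS2 : S^2 = 2 := by
    rw [hSdef, ← Complex.ofReal_pow, Real.sq_sqrt (by norm_num : (0:ℝ) ≤ 2)]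
    norm_num
  have hSne : S ≠ 0 := by
    rw [hSdef]
    simp only [ne_eq, Complex.ofReal_eq_zero]
    positivity
  have hSx : S * (x/S) = x := by field_simp
  have hconj : (starRingEnd ℂ) (x / S) = -(x/S) := by
    rw [hxdef, hSdef]
    simp [map_div₀, Complex.conj_ofReal]
    ring
  have hRsub : Rpol t m n = ∑ k ∈ Finset.range (min m n + 1),
      (m.choose k : ℂ) * (n.choose k : ℂ) * 2^k * (k.factorial : ℂ) * x^(m+n-2*k) := by
    rw [Rpol]
    rw [← Finset.sum_subset (Finset.range_subset_range.mpr (by omega : min m n + 1 ≤ n + 1))]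
    intro k hk hk'
    have hkm : m < k := by
      have h1 := Finset.mem_range.mp hk
      have h2 : ¬ (k < min m n + 1) := fun h => hk' (Finset.mem_range.mpr h)
      omega
    have : m.choose k = 0 := Nat.choose_eq_zero_of_lt hkm
    simp [this]
  rw [hRsub, sqrt2_pow, Hc, mul_assoc, Finset.mul_sum, Finset.mul_sum]
  refine Finset.sum_congr rfl fun k hk => ?_
  have hkmn : k ≤ min m n := by have := Finset.mem_range.mp hk; omega
  have e1 : m + n - 2*k + 2*k = m + n := by omega
  have e2 : (m-k) + (n-k) = m+n-2*k := by omega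
  have e3 : k + (n-k) = n := by omega
  rw [hconj]
  have key : ((-1:ℂ))^n * S^(m+n) * ((-1)^k * (x/S)^(m-k) * (-(x/S))^(n-k))
      = 2^k * x^(m+n-2*k) := by
    rw [neg_pow (x/S) (n-k)]
    calc ((-1:ℂ))^n * S^(m+n) * ((-1)^k * (x/S)^(m-k) * ((-1)^(n-k) * (x/S)^(n-k)))
        = ((-1:ℂ))^n * ((-1)^k * (-1)^(n-k)) * S^(m+n) * ((x/S)^(m-k) * (x/S)^(n-k)) := by ring
      _ = ((-1:ℂ))^n * (-1)^n * S^(m+n) * (x/S)^(m+n-2*k) := by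
          rw [← pow_add (-1:ℂ) k (n-k), e3, ← pow_add (x/S) (m-k) (n-k), e2]
      _ = S^(m+n) * (x/S)^(m+n-2*k) := by rw [← pow_add, ← two_mul, pow_mul]; norm_num
      _ = (S^(m+n-2*k) * (S^2)^k) * (x/S)^(m+n-2*k) := by rw [← pow_mul, ← pow_add, e1]
      _ = (S^2)^k * ((S * (x/S))^(m+n-2*k)) := by rw [mul_pow]; ring
      _ = 2^k * x^(m+n-2*k) := by rw [hS2, hSx]
  linear_combination ((m.choose k : ℂ) * (n.choose k : ℂ) * (k.factorial : ℂ)) * key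

end HermiteFourierAux

open HermiteFourierAux in
theorem hermite_fourier_integral (m n : ℕ) (t : ℝ) :
    ∫ y : ℝ, (Hphys m y : ℂ) * (Hphys n y : ℂ) * Complex.exp (-(y : ℂ)^2 - Complex.I * t * y)
      = (-1 : ℂ)^n * (Real.sqrt Real.pi : ℂ) * (((2 : ℝ) ^ (((m : ℝ) + n) / 2) : ℝ) : ℂ)
          * Complex.exp (-(t : ℂ)^2 / 4)
          * Hc m n (-(Complex.I * t) / (Real.sqrt 2 : ℂ)) := by
  have hL : (∫ y : ℝ, (Hphys m y : ℂ) * (Hphys n y : ℂ)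
        * Complex.exp (-(y : ℂ)^2 - Complex.I * t * y)) = FInt t m n := by
    rw [FInt]
    apply integral_congr_ae
    filter_upwards with y
    rw [Hphys_eval, Hphys_eval]
    have harg : (-(y:ℂ)^2 - Complex.I * t * y) = ((-(y^2) : ℝ) : ℂ) + (-(Complex.I*t*y)) := by
      push_cast; ring
    rw [harg, Complex.exp_add, ← Complex.ofReal_exp]
    simp only [Polynomial.eval_mul]
    push_cast
    ring
  rw [hL, FInt_eq_Rpol]
  have hR := Hc_eq_Rpol t m n
  linear_combination (-(((Real.sqrt Real.pi : ℝ) : ℂ) * Complex.exp (-(t:ℂ)^2/4))) * hR
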